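/- arXiv:2506.02980 — 3 statements merged into one kernel-verified Lean document; each statement's English description precedes it below -/
import Mathlib

section
/- Let Θ ⊆ ℝ^d be convex and suppose Θ contains a closed Euclidean ball of radius r > 0 centered at c_r. Let f: Θ → ℝ be convex with |f(x)| ≤ 1 on Θ. Let u, c_u ∈ Θ with ‖u − c_u‖ ≤ P/2 for some P > 0. Define α₀ = 2r/(P + 2r) and v = α₀ c_u + (1−α₀) c_r. Then v ∈ Θ, the point u' = c_r + (α₀/(1−α₀))(c_u − u) lies in Θ, and f(v) ≤ f(u) + P/r. -/
theorem pathlength_comparator {d : ℕ} (Θ : Set (EuclideanSpace ℝ (Fin d)))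
    (hΘ : Convex ℝ Θ) (r P : ℝ) (hr : 0 < r) (hP : 0 < P)
    (cr : EuclideanSpace ℝ (Fin d)) (hball : Metric.closedBall cr r ⊆ Θ)
    (f : EuclideanSpace ℝ (Fin d) → ℝ) (hconv : ConvexOn ℝ Θ f)
    (hbdd : ∀ x ∈ Θ, |f x| ≤ 1)
    (u cu : EuclideanSpace ℝ (Fin d)) (hu : u ∈ Θ) (hcu : cu ∈ Θ)
    (hdist : ‖u - cu‖ ≤ P / 2) :
    let α₀ : ℝ := 2 * r / (P + 2 * r)
    let v := α₀ • cu + (1 - α₀) • cr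
    let u' := cr + (α₀ / (1 - α₀)) • (cu - u)
    v ∈ Θ ∧ u' ∈ Θ ∧ f v ≤ f u + P / r := by
  intro α₀ v u'
  have hden : 0 < P + 2 * r := by linarith
  have hα0 : 0 < α₀ := by positivity
  have hα1 : α₀ < 1 := by
    rw [div_lt_one hden]; linarith
  have h1α : 1 - α₀ = P / (P + 2 * r) := by
    field_simp [α₀]
    have hα : α₀ * (P + 2 * r) = 2 * r := div_mul_cancel₀ _ hden.ne'
    linear_combination -hα
  have hratio : α₀ / (1 - α₀) = 2 * r / P := by
    rw [h1α]
    field_simp [α₀]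
    exact div_mul_cancel₀ _ hden.ne'
  have hcrΘ : cr ∈ Θ := hball (Metric.mem_closedBall_self hr.le)
  have hv : v ∈ Θ := hΘ hcu hcrΘ hα0.le (by linarith) (by ring)
  have hu'ball : u' ∈ Metric.closedBall cr r := by
    rw [Metric.mem_closedBall, dist_eq_norm]
    have : u' - cr = (α₀ / (1 - α₀)) • (cu - u) := by simp [u']
    rw [this, norm_smul, hratio]
    have h2 : ‖cu - u‖ ≤ P / 2 := by rwa [norm_sub_rev] at hdist
    have h3 : ‖(2 * r / P : ℝ)‖ = 2 * r / P := by
      rw [Real.norm_eq_abs, abs_of_pos (by positivity)]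
    rw [h3]
    calc 2 * r / P * ‖cu - u‖ ≤ 2 * r / P * (P / 2) := by
          apply mul_le_mul_of_nonneg_left h2 (by positivity)
      _ = r := by field_simp
  have hu' : u' ∈ Θ := hball hu'ball
  refine ⟨hv, hu', ?_⟩
  have hvcomb : v = α₀ • u + (1 - α₀) • u' := by
    simp only [v, u', smul_add, smul_sub, smul_smul]
    rw [mul_div_cancel₀ _ (by linarith : (1 : ℝ) - α₀ ≠ 0)]
    module
  have hconvf : f v ≤ α₀ * f u + (1 - α₀) * f u' := by
    rw [hvcomb]
    exact hconv.2 hu hu' hα0.le (by linarith) (by ring)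
  have hfu' : f u' ≤ 1 := (abs_le.mp (hbdd u' hu')).2
  have hfu : -1 ≤ f u := (abs_le.mp (hbdd u hu)).1
  have key : f v ≤ f u + 2 * (1 - α₀) := by
    have : α₀ * f u + (1 - α₀) * f u' ≤ f u + 2 * (1 - α₀) := by nlinarith
    linarith
  have : 2 * (1 - α₀) ≤ P / r := by
    rw [h1α, show (2:ℝ) * (P / (P + 2 * r)) = 2 * P / (P + 2 * r) by ring,
      div_le_div_iff₀ hden hr]
    nlinarith
  linarith
end

section
/- Let f_1, …, f_L : Θ → ℝ be convex functions on a convex set Θ, and suppose the total variation ∑_{t=2}^L max_{z∈Θ}|f_t(z) − f_{t−1}(z)| ≤ Δ_s. Let f̄ = (1/L)∑_{t=1}^L f_t and let v ∈ argmin_{z∈Θ} f̄(z). Then for any comparator sequence u_1, …, u_L ∈ Θ: ∑_{t=1}^L (f_t(v) − f_t(u_t)) ≤ Δ_s · L. -/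
theorem total_variation_comparator {E : Type*} [AddCommGroup E] [Module ℝ E]
    (Θ : Set E) (hΘ : Convex ℝ Θ)
    (L : ℕ) (hL : 1 ≤ L)
    (f : ℕ → E → ℝ) (hconv : ∀ t ∈ Finset.Icc 1 L, ConvexOn ℝ Θ (f t))
    (Δs : ℝ) (d : ℕ → ℝ)
    (hd : ∀ t ∈ Finset.Icc 2 L, ∀ z ∈ Θ, |f t z - f (t - 1) z| ≤ d t)
    (hsum : ∑ t ∈ Finset.Icc 2 L, d t ≤ Δs)
    (v : E) (hv : v ∈ Θ)
    (hvmin : ∀ z ∈ Θ, (∑ t ∈ Finset.Icc 1 L, f t v) ≤ ∑ t ∈ Finset.Icc 1 L, f t z)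
    (u : ℕ → E) (hu : ∀ t ∈ Finset.Icc 1 L, u t ∈ Θ) :
    ∑ t ∈ Finset.Icc 1 L, (f t v - f t (u t)) ≤ Δs * L := by
  have hdnn : ∀ t ∈ Finset.Icc 2 L, 0 ≤ d t := by
    intro t ht
    exact le_trans (abs_nonneg _) (hd t ht v hv)
  -- telescoping bound
  have htel : ∀ z ∈ Θ, ∀ a, 1 ≤ a → ∀ b, a ≤ b → b ≤ L →
      |f b z - f a z| ≤ ∑ r ∈ Finset.Icc (a + 1) b, d r := by
    intro z hz a ha b hab hbL
    induction b, hab using Nat.le_induction with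
    | base => simp
    | succ b hab ih =>
      have hbL' : b ≤ L := by omega
      have h1 : |f (b + 1) z - f b z| ≤ d (b + 1) := by
        have := hd (b + 1) (by simp [Finset.mem_Icc]; omega) z hz
        simpa using this
      have h2 := ih hbL'
      have : |f (b + 1) z - f a z| ≤ d (b + 1) + ∑ r ∈ Finset.Icc (a + 1) b, d r := by
        calc |f (b + 1) z - f a z|
            ≤ |f (b + 1) z - f b z| + |f b z - f a z| := by
              have := abs_sub_le (f (b + 1) z) (f b z) (f a z)
              simpa using this
          _ ≤ d (b + 1) + ∑ r ∈ Finset.Icc (a + 1) b, d r := add_le_add h1 h2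
      rw [Finset.sum_Icc_succ_top (Nat.succ_le_succ hab)]
      linarith
  -- pairwise bound
  have hpair : ∀ z ∈ Θ, ∀ s ∈ Finset.Icc 1 L, ∀ t ∈ Finset.Icc 1 L,
      f s z - f t z ≤ Δs := by
    intro z hz s hs t ht
    simp only [Finset.mem_Icc] at hs ht
    have key : ∀ a b : ℕ, 1 ≤ a → a ≤ b → b ≤ L → f b z - f a z ≤ Δs := by
      intro a b ha hab hbL
      have h1 := htel z hz a ha b hab hbL
      have h2 : ∑ r ∈ Finset.Icc (a + 1) b, d r ≤ ∑ r ∈ Finset.Icc 2 L, d r := by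
        apply Finset.sum_le_sum_of_subset_of_nonneg
        · intro r hr
          simp only [Finset.mem_Icc] at hr ⊢
          omega
        · intro r hr _; exact hdnn r hr
      have := abs_le.mp h1
      linarith [this.2]
    rcases le_total s t with h | h
    · have hle : f s z - f t z ≤ |f t z - f s z| := by
        rw [abs_sub_comm]; exact le_abs_self _
      have h1 := htel z hz s hs.1 t h ht.2
      have h2 : ∑ r ∈ Finset.Icc (s + 1) t, d r ≤ ∑ r ∈ Finset.Icc 2 L, d r := by
        apply Finset.sum_le_sum_of_subset_of_nonneg
        · intro r hr; simp only [Finset.mem_Icc] at hr ⊢; omega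
        · intro r hr _; exact hdnn r hr
      rw [abs_sub_comm] at h1
      linarith [le_abs_self (f s z - f t z)]
    · exact key t s ht.1 h hs.2
  -- per term bound: L * (f t v - f t (u t)) ≤ L * f t v - ∑ f s v + L * Δs
  have hL0 : (0:ℝ) < (L:ℝ) := by exact_mod_cast hL
  have hcard : (Finset.Icc 1 L).card = L := by
    rw [Nat.card_Icc]; omega
  have hperm : ∀ t ∈ Finset.Icc 1 L,
      (L:ℝ) * (f t v - f t (u t)) ≤ (L:ℝ) * f t v - (∑ s ∈ Finset.Icc 1 L, f s v) + (L:ℝ) * Δs := by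
    intro t ht
    have hut := hu t ht
    have h1 : ∑ s ∈ Finset.Icc 1 L, (f s (u t) - f t (u t)) ≤ (L:ℝ) * Δs := by
      calc ∑ s ∈ Finset.Icc 1 L, (f s (u t) - f t (u t))
          ≤ ∑ s ∈ Finset.Icc 1 L, Δs :=
            Finset.sum_le_sum (fun s hs => hpair (u t) hut s hs t ht)
        _ = (L:ℝ) * Δs := by rw [Finset.sum_const, hcard, nsmul_eq_mul]
    have h2 : ∑ s ∈ Finset.Icc 1 L, f s v ≤ ∑ s ∈ Finset.Icc 1 L, f s (u t) := hvmin (u t) hut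
    rw [Finset.sum_sub_distrib, Finset.sum_const, hcard, nsmul_eq_mul] at h1
    nlinarith
  have hsum2 : ∑ t ∈ Finset.Icc 1 L, (L:ℝ) * (f t v - f t (u t)) ≤ (L:ℝ) * ((L:ℝ) * Δs) := by
    calc ∑ t ∈ Finset.Icc 1 L, (L:ℝ) * (f t v - f t (u t))
        ≤ ∑ t ∈ Finset.Icc 1 L, ((L:ℝ) * f t v - (∑ s ∈ Finset.Icc 1 L, f s v) + (L:ℝ) * Δs) :=
          Finset.sum_le_sum hperm
      _ = (L:ℝ) * (∑ t ∈ Finset.Icc 1 L, f t v) - (L:ℝ) * (∑ s ∈ Finset.Icc 1 L, f s v)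
            + (L:ℝ) * ((L:ℝ) * Δs) := by
          rw [Finset.sum_add_distrib, Finset.sum_sub_distrib, ← Finset.mul_sum,
            Finset.sum_const, Finset.sum_const, hcard, nsmul_eq_mul, nsmul_eq_mul]
      _ = (L:ℝ) * ((L:ℝ) * Δs) := by ring
  rw [← Finset.mul_sum] at hsum2
  have := (mul_le_mul_iff_right₀ hL0).mp hsum2
  linarith
end

section
/- Let λ > 0 and define step sizes μ_t = 1/(λ(t − r + 1)) for t = r, r+1, …, s. Consider projected gradient descent on a closed convex set K ⊆ ℝ^d: x_{t+1} = Π_K(x_t − μ_t g_t), where Π_K is the Euclidean projection and g_t ∈ ℝ^d with ‖g_t‖ ≤ G'. Then for every u ∈ K: 2∑_{t=r}^s ⟨x_t − u, g_t⟩ − λ∑_{t=r}^s ‖x_t − u‖² ≤ ∑_{t=r}^s μ_t ‖g_t‖² ≤ ((G')²/λ)(1 + log(s − r + 1)). -/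
set_option maxHeartbeats 1000000

lemma proj_nonexp {F : Type*} [NormedAddCommGroup F] [InnerProductSpace ℝ F]
    {K : Set F} (hK : Convex ℝ K) {p v u : F} (hv : v ∈ K) (hu : u ∈ K)
    (hmin : ∀ y ∈ K, ‖v - p‖ ≤ ‖y - p‖) : ‖v - u‖^2 ≤ ‖p - u‖^2 := by
  have hmin' : ‖p - v‖ = ⨅ w : K, ‖p - (w : F)‖ := by
    haveI : Nonempty K := ⟨⟨u, hu⟩⟩
    apply le_antisymm
    · apply le_ciInf
      intro w
      have h1 := hmin w w.2
      rwa [norm_sub_rev v p, norm_sub_rev (w : F) p] at h1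
    · have hbdd : BddBelow (Set.range fun w : K => ‖p - (w : F)‖) :=
        ⟨0, by rintro _ ⟨w, rfl⟩; exact norm_nonneg _⟩
      exact ciInf_le hbdd ⟨v, hv⟩
  have hchar := (norm_eq_iInf_iff_real_inner_le_zero hK hv).mp hmin' u hu
  have hexp := @norm_sub_sq_real F _ _ (p - v) (u - v)
  have heq : (p - v) - (u - v) = p - u := by abel
  rw [heq] at hexp
  rw [norm_sub_rev v u]
  nlinarith [sq_nonneg ‖p - v‖]

lemma harm_le_log (n : ℕ) :
    ∑ k ∈ Finset.range n, (1:ℝ)/(k+1) ≤ 1 + Real.log n := by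
  induction n with
  | zero => simp
  | succ n ih =>
    rw [Finset.sum_range_succ]
    rcases Nat.eq_zero_or_pos n with h | h
    · subst h; simp
    · have hn : (0:ℝ) < n := by exact_mod_cast h
      have key : (1:ℝ)/(n+1) ≤ Real.log ((n:ℝ)+1) - Real.log n := by
        have h1 : Real.log ((n:ℝ)/((n:ℝ)+1)) ≤ (n:ℝ)/((n:ℝ)+1) - 1 :=
          Real.log_le_sub_one_of_pos (by positivity)
        rw [Real.log_div (ne_of_gt hn) (by positivity)] at h1
        have h2 : (n:ℝ)/((n:ℝ)+1) - 1 = -(1/((n:ℝ)+1)) := by field_simp; ring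
        linarith [h2 ▸ h1]
      push_cast
      linarith

theorem projected_gd_strongly_convex {d : ℕ}
    (K : Set (EuclideanSpace ℝ (Fin d))) (hK : Convex ℝ K) (hKc : IsClosed K)
    (lam G' : ℝ) (hlam : 0 < lam) (hG' : 0 ≤ G')
    (r s : ℕ) (hrs : r ≤ s)
    (x g : ℕ → EuclideanSpace ℝ (Fin d))
    (hx : ∀ t, x t ∈ K)
    (hg : ∀ t ∈ Finset.Icc r s, ‖g t‖ ≤ G')
    (μ : ℕ → ℝ) (hμ : ∀ t, μ t = 1 / (lam * ((t - r : ℕ) + 1)))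
    (hproj : ∀ t, ∀ y ∈ K,
      ‖x (t + 1) - (x t - μ t • g t)‖ ≤ ‖y - (x t - μ t • g t)‖)
    (u : EuclideanSpace ℝ (Fin d)) (hu : u ∈ K) :
    2 * ∑ t ∈ Finset.Icc r s, (inner ℝ (x t - u) (g t) : ℝ)
        - lam * ∑ t ∈ Finset.Icc r s, ‖x t - u‖^2
      ≤ ∑ t ∈ Finset.Icc r s, μ t * ‖g t‖^2 ∧
    ∑ t ∈ Finset.Icc r s, μ t * ‖g t‖^2
      ≤ G'^2 / lam * (1 + Real.log ((s - r : ℕ) + 1)) := by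
  -- notation
  set n : ℕ := s + 1 - r with hn
  have hnval : n = (s - r) + 1 := by omega
  have hμval : ∀ k : ℕ, μ (r + k) = 1 / (lam * ((k:ℝ) + 1)) := by
    intro k
    rw [hμ]
    congr 2
    simp
  have hμpos : ∀ t, 0 < μ t := by
    intro t; rw [hμ]; positivity
  -- nonexpansiveness of the projection step
  have hstep : ∀ t, ‖x (t+1) - u‖^2 ≤ ‖(x t - μ t • g t) - u‖^2 := fun t =>
    proj_nonexp hK (hx (t+1)) hu (fun y hy => hproj t y hy)
  -- expansion of the squared norm
  have hexp : ∀ t : ℕ, ‖(x t - μ t • g t) - u‖^2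
      = ‖x t - u‖^2 - 2 * μ t * (inner ℝ (x t - u) (g t) : ℝ) + μ t^2 * ‖g t‖^2 := by
    intro t
    have heq : (x t - μ t • g t) - u = (x t - u) - μ t • g t := by abel
    rw [heq, @norm_sub_sq_real (EuclideanSpace ℝ (Fin d)) _ _, real_inner_smul_right,
      norm_smul, Real.norm_eq_abs, mul_pow, sq_abs]
    ring
  -- abbreviations
  set b : ℕ → ℝ := fun k => ‖x (r + k) - u‖^2 with hb
  set I : ℕ → ℝ := fun k => (inner ℝ (x (r + k) - u) (g (r + k)) : ℝ) with hI
  set N : ℕ → ℝ := fun k => ‖g (r + k)‖^2 with hN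
  have hμmul : ∀ k : ℕ, μ (r + k) * (lam * ((k:ℝ) + 1)) = 1 := by
    intro k
    rw [hμval k]
    field_simp
  -- per-step key inequality
  have hkey : ∀ k : ℕ, 2 * I k ≤ lam * ((k:ℝ)+1) * (b k - b (k+1)) + μ (r+k) * N k := by
    intro k
    have h0 : b (k+1) ≤ b k - 2 * μ (r+k) * I k + μ (r+k)^2 * N k := by
      have h1 := hstep (r + k)
      have h2 := hexp (r + k)
      have : r + (k + 1) = (r + k) + 1 := by omega
      rw [hb, hI, hN]
      simp only [this]
      linarith [h1.trans_eq h2]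
    have h1 : lam * ((k:ℝ)+1) * b (k+1)
        ≤ lam * ((k:ℝ)+1) * (b k - 2 * μ (r+k) * I k + μ (r+k)^2 * N k) :=
      mul_le_mul_of_nonneg_left h0 (by positivity)
    have h2 : lam * ((k:ℝ)+1) * (b k - 2 * μ (r+k) * I k + μ (r+k)^2 * N k)
        = lam * ((k:ℝ)+1) * b k - 2 * I k + μ (r+k) * N k := by
      linear_combination (μ (r+k) * N k - 2 * I k) * hμmul k
    linarith
  -- rewrite Icc sums as range sums
  have hIcc : ∀ f : ℕ → ℝ, ∑ t ∈ Finset.Icc r s, f t = ∑ k ∈ Finset.range n, f (r + k) := by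
    intro f
    rw [← Finset.Ico_add_one_right_eq_Icc, Finset.sum_Ico_eq_sum_range]
  rw [hIcc (fun t => (inner ℝ (x t - u) (g t) : ℝ)), hIcc (fun t => ‖x t - u‖^2),
    hIcc (fun t => μ t * ‖g t‖^2)]
  -- telescoping sum
  have htel : ∑ k ∈ Finset.range n, lam * ((k:ℝ)+1) * (b k - b (k+1))
      = lam * ∑ k ∈ Finset.range n, b k - lam * n * b n := by
    have hsplit : ∀ k : ℕ, lam * ((k:ℝ)+1) * (b k - b (k+1))
        = (lam * ((k:ℝ)+1) * b k - lam * (((k+1:ℕ):ℝ)+1) * b (k+1)) + lam * b (k+1) := by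
      intro k; push_cast; ring
    rw [Finset.sum_congr rfl (fun k _ => hsplit k), Finset.sum_add_distrib,
      Finset.sum_range_sub' (fun k => lam * ((k:ℝ)+1) * b k) n]
    have hshift : ∑ k ∈ Finset.range n, b (k+1)
        = ∑ k ∈ Finset.range n, b k + b n - b 0 := by
      have h1 := Finset.sum_range_succ' b n
      have h2 := Finset.sum_range_succ b n
      linarith [h1.symm.trans h2]
    have h4 : ∑ k ∈ Finset.range n, lam * b (k+1) = lam * ∑ k ∈ Finset.range n, b (k+1) :=
      (Finset.mul_sum _ _ _).symm
    rw [h4, hshift]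
    push_cast
    ring
  constructor
  · -- first inequality
    have hsum1 : ∑ k ∈ Finset.range n, 2 * I k
        ≤ ∑ k ∈ Finset.range n, (lam * ((k:ℝ)+1) * (b k - b (k+1)) + μ (r+k) * N k) :=
      Finset.sum_le_sum (fun k _ => hkey k)
    rw [Finset.sum_add_distrib, htel] at hsum1
    rw [← Finset.mul_sum] at hsum1
    have hbn : 0 ≤ lam * n * b n := by positivity
    simp only [hb, hI, hN] at hsum1 hbn ⊢
    linarith
  · -- second inequality
    have hterm : ∀ k ∈ Finset.range n, μ (r+k) * N k ≤ G'^2 / lam * (1/((k:ℝ)+1)) := by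
      intro k hk
      have hks : r + k ∈ Finset.Icc r s := by
        simp only [Finset.mem_range] at hk
        simp only [Finset.mem_Icc]
        omega
      have hgk : ‖g (r+k)‖ ≤ G' := hg _ hks
      have hN2 : N k ≤ G'^2 := by
        rw [hN]
        exact pow_le_pow_left₀ (norm_nonneg _) hgk 2
      have h1 : μ (r+k) * N k ≤ μ (r+k) * G'^2 :=
        mul_le_mul_of_nonneg_left hN2 (le_of_lt (hμpos _))
      have h2 : μ (r+k) * G'^2 = G'^2 / lam * (1/((k:ℝ)+1)) := by
        rw [hμval k]
        field_simp
      linarith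
    have hsum2 : ∑ k ∈ Finset.range n, μ (r+k) * N k
        ≤ ∑ k ∈ Finset.range n, G'^2 / lam * (1/((k:ℝ)+1)) :=
      Finset.sum_le_sum hterm
    rw [← Finset.mul_sum] at hsum2
    have hlog : ∑ k ∈ Finset.range n, (1:ℝ)/((k:ℝ)+1) ≤ 1 + Real.log n := harm_le_log n
    have hcast : ((s - r : ℕ):ℝ) + 1 = (n:ℝ) := by
      rw [hnval]; push_cast; ring
    rw [hcast]
    have hmono : G'^2 / lam * ∑ k ∈ Finset.range n, (1:ℝ)/((k:ℝ)+1)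
        ≤ G'^2 / lam * (1 + Real.log n) :=
      mul_le_mul_of_nonneg_left hlog (by positivity)
    simp only [hN] at hsum2
    linarith
end
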